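/- Let X be a Banach space whose norm is 2-rough. Then every weak-star slice of the dual unit ball B_{X*} has diameter 2, where a weak-star slice is a set of the form S(B_{X*}, x, α) = {x* ∈ B_{X*} : x*(x) > ‖x‖ − α} for x ∈ X nonzero and α > 0. -/

import Mathlib

open Filter Topology

/-- if the norm of `X` is 2-rough, then every weak-star slice of the
dual unit ball has diameter 2. -/
theorem stmt4 {X : Type*} [NormedAddCommGroup X] [NormedSpace ℝ X] [CompleteSpace X]
    (hrough : ∀ x : X, 2 ≤ limsup (fun h : X => (‖x + h‖ + ‖x - h‖ - 2 * ‖x‖) / ‖h‖)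
      (nhdsWithin (0 : X) {(0 : X)}ᶜ))
    (x : X) (hx : x ≠ 0) (α : ℝ) (hα : 0 < α) :
    Metric.diam {f : X →L[ℝ] ℝ | ‖f‖ ≤ 1 ∧ f x > ‖x‖ - α} = 2 := by
  have hnt : Nontrivial X := nontrivial_of_ne x 0 hx
  set S : Set (X →L[ℝ] ℝ) := {f : X →L[ℝ] ℝ | ‖f‖ ≤ 1 ∧ f x > ‖x‖ - α} with hS
  have hbdd : Bornology.IsBounded S := by
    apply (Metric.isBounded_closedBall (x := (0 : X →L[ℝ] ℝ)) (r := 1)).subset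
    intro f hf
    simpa [mem_closedBall_zero_iff] using hf.1
  apply le_antisymm
  · apply Metric.diam_le_of_forall_dist_le (by norm_num)
    rintro f ⟨hf1, -⟩ g ⟨hg1, -⟩
    calc dist f g = ‖f - g‖ := dist_eq_norm f g
    _ ≤ ‖f‖ + ‖g‖ := norm_sub_le _ _
    _ ≤ 2 := by linarith
  · refine le_of_forall_pos_le_add ?_
    intro ε hε
    -- get h small with roughness estimate
    haveI hneb : (𝓝[≠] (0 : X)).NeBot := Module.punctured_nhds_neBot ℝ X 0
    have hcob : (𝓝[≠] (0 : X)).IsCoboundedUnder (· ≤ ·)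
        (fun h : X => (‖x + h‖ + ‖x - h‖ - 2 * ‖x‖) / ‖h‖) := by
      refine isCoboundedUnder_le_of_le _ (x := (-2 : ℝ)) fun h => ?_
      rcases eq_or_ne h 0 with rfl | hh
      · simp
      · rw [le_div_iff₀ (norm_pos_iff.mpr hh)]
        have h1 : ‖x‖ - ‖h‖ ≤ ‖x + h‖ := by
          have h3 := norm_add_le (x + h) (-h)
          have e : (x + h) + (-h) = x := by abel
          rw [e, norm_neg] at h3
          linarith
        have h2 : ‖x‖ - ‖h‖ ≤ ‖x - h‖ := by
          have h3 := norm_add_le (x - h) h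
          have e : (x - h) + h = x := by abel
          rw [e] at h3
          linarith
        nlinarith [norm_nonneg h]
    have hfreq : ∃ᶠ h in 𝓝[≠] (0 : X),
        2 - ε < (‖x + h‖ + ‖x - h‖ - 2 * ‖x‖) / ‖h‖ :=
      frequently_lt_of_lt_limsup hcob (lt_of_lt_of_le (by linarith) (hrough x))
    have hxpos : 0 < ‖x‖ := norm_pos_iff.mpr hx
    have hsmall : ∀ᶠ h in 𝓝[≠] (0 : X), ‖h‖ < min ‖x‖ (α / 2) := by
      apply eventually_nhdsWithin_of_eventually_nhds
      have : Metric.ball (0 : X) (min ‖x‖ (α / 2)) ∈ 𝓝 (0 : X) :=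
        Metric.ball_mem_nhds 0 (lt_min hxpos (by linarith))
      filter_upwards [this] with h hh
      simpa [Metric.mem_ball, dist_eq_norm] using hh
    obtain ⟨h, ⟨hh1, hh2⟩, hh0⟩ := ((hfreq.and_eventually hsmall).and_eventually
      (eventually_mem_nhdsWithin)).exists
    -- hh0 : h ∈ {0}ᶜ
    have hh0' : h ≠ 0 := hh0
    have hhn : 0 < ‖h‖ := norm_pos_iff.mpr hh0'
    have hhx : ‖h‖ < ‖x‖ := lt_of_lt_of_le hh2 (min_le_left _ _)
    have hhα : ‖h‖ < α / 2 := lt_of_lt_of_le hh2 (min_le_right _ _)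
    have hsum : 2 * ‖x‖ + (2 - ε) * ‖h‖ < ‖x + h‖ + ‖x - h‖ := by
      have := (lt_div_iff₀ hhn).mp hh1
      linarith
    have hxh : x + h ≠ 0 := by
      intro hc
      have he : h = -x := eq_neg_of_add_eq_zero_right hc
      rw [he, norm_neg] at hhx
      exact lt_irrefl _ hhx
    have hxh' : x - h ≠ 0 := by
      intro hc
      rw [sub_eq_zero] at hc
      rw [← hc] at hhx
      exact lt_irrefl _ hhx
    obtain ⟨f, hf1, hf2⟩ := exists_dual_vector ℝ (x + h) (norm_ne_zero_iff.mpr hxh)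
    obtain ⟨g, hg1, hg2⟩ := exists_dual_vector ℝ (x - h) (norm_ne_zero_iff.mpr hxh')
    have hfx : ‖x + h‖ - ‖h‖ ≤ f x := by
      have hfh : f h ≤ ‖h‖ := by
        have := le_abs_self (f h)
        calc f h ≤ |f h| := le_abs_self _
        _ ≤ ‖f‖ * ‖h‖ := f.le_opNorm h
        _ = ‖h‖ := by rw [hf1, one_mul]
      have : f (x + h) = f x + f h := map_add f x h
      have hfr : (‖x + h‖ : ℝ) = f x + f h := by
        rw [← this, hf2]; norm_num
      linarith
    have hgx : ‖x - h‖ - ‖h‖ ≤ g x := by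
      have hgh : -g h ≤ ‖h‖ := by
        calc -g h ≤ |g h| := neg_le_abs _
        _ ≤ ‖g‖ * ‖h‖ := g.le_opNorm h
        _ = ‖h‖ := by rw [hg1, one_mul]
      have : g (x - h) = g x - g h := map_sub g x h
      have hgr : (‖x - h‖ : ℝ) = g x - g h := by
        rw [← this, hg2]; norm_num
      linarith
    have hfS : f ∈ S := by
      have : ‖x‖ - ‖h‖ ≤ ‖x + h‖ := by
        have h3 := norm_add_le (x + h) (-h)
        have e : (x + h) + (-h) = x := by abel
        rw [e, norm_neg] at h3
        linarith
      exact ⟨le_of_eq hf1, by linarith⟩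
    have hgS : g ∈ S := by
      have : ‖x‖ - ‖h‖ ≤ ‖x - h‖ := by
        have h3 := norm_add_le (x - h) h
        have e : (x - h) + h = x := by abel
        rw [e] at h3
        linarith
      exact ⟨le_of_eq hg1, by linarith⟩
    -- key estimate
    have hfxle : f x ≤ ‖x‖ := by
      calc f x ≤ |f x| := le_abs_self _
      _ ≤ ‖f‖ * ‖x‖ := f.le_opNorm x
      _ = ‖x‖ := by rw [hf1, one_mul]
    have hgxle : g x ≤ ‖x‖ := by
      calc g x ≤ |g x| := le_abs_self _
      _ ≤ ‖g‖ * ‖x‖ := g.le_opNorm x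
      _ = ‖x‖ := by rw [hg1, one_mul]
    have hfr : (‖x + h‖ : ℝ) = f x + f h := by
      have : f (x + h) = f x + f h := map_add f x h
      rw [← this, hf2]; norm_num
    have hgr : (‖x - h‖ : ℝ) = g x - g h := by
      have : g (x - h) = g x - g h := map_sub g x h
      rw [← this, hg2]; norm_num
    have hdiff : (2 - ε) * ‖h‖ ≤ (f - g) h := by
      have : (f - g) h = f h - g h := by simp
      rw [this]; linarith
    have hdist : 2 - ε ≤ dist f g := by
      rw [dist_eq_norm]
      have h1 : (f - g) h ≤ ‖f - g‖ * ‖h‖ := by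
        calc (f - g) h ≤ |(f - g) h| := le_abs_self _
        _ ≤ ‖f - g‖ * ‖h‖ := (f - g).le_opNorm h
      have := le_trans hdiff h1
      exact le_of_mul_le_mul_right (by linarith) hhn
    calc (2 : ℝ) ≤ dist f g + ε := by linarith
    _ ≤ Metric.diam S + ε :=
      add_le_add_left (Metric.dist_le_diam_of_mem hbdd hfS hgS) ε
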